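/- Let G be a finite bipartite simple graph with edge set E. A vector x ∈ ℝ^E belongs to the perfect matching polytope Poly(G) if and only if x is non-negative and 1-regular. -/

import Mathlib

set_option linter.unusedSectionVars false


open SimpleGraph

variable {V : Type*}

/-- The incidence vector (in ℝ^E) of the edge set of a subgraph `M`. -/
noncomputable def incidenceVector (G : SimpleGraph V) (M : G.Subgraph) : G.edgeSet → ℝ :=
  fun e => M.edgeSet.indicator (fun _ => (1 : ℝ)) ↑e

/-- The perfect matching polytope: the convex hull of the incidence vectors
of the perfect matchings of `G`. -/
def matchingPolytope (G : SimpleGraph V) : Set (G.edgeSet → ℝ) :=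
  convexHull ℝ {x | ∃ M : G.Subgraph, M.IsPerfectMatching ∧ x = incidenceVector G M}

/-- A vector x ∈ ℝ^E is 1-regular if at every vertex the incident coordinates sum to 1. -/
def OneRegular (G : SimpleGraph V) [Fintype V] [DecidableEq V] [DecidableRel G.Adj]
    (x : G.edgeSet → ℝ) : Prop :=
  ∀ v : V, ∑ e : G.edgeSet, (if v ∈ (e : Sym2 V) then x e else 0) = 1

section Aux

open Finset

/-- An unordered pair containing two given distinct elements is that pair. -/
lemma sym2_eq_of_ne_mem {u v : V} (huv : u ≠ v) {e : Sym2 V} (hu : u ∈ e) (hv : v ∈ e) :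
    e = s(u, v) := by
  induction e with
  | _ a b =>
    rw [Sym2.mem_iff] at hu hv
    rcases hu with rfl | rfl <;> rcases hv with rfl | rfl <;>
      first | exact absurd rfl huv | rfl | exact Sym2.eq_swap

variable [Fintype V] [DecidableEq V] (G : SimpleGraph V) [DecidableRel G.Adj]

/-- Incidence vectors of perfect matchings are nonnegative. -/
lemma incidenceVector_nonneg (M : G.Subgraph) (e : G.edgeSet) :
    0 ≤ incidenceVector G M e := by
  unfold incidenceVector
  exact Set.indicator_nonneg (fun _ _ => zero_le_one) _

lemma incidenceVector_apply (M : G.Subgraph) (e : G.edgeSet)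
    [Decidable ((e : Sym2 V) ∈ M.edgeSet)] :
    incidenceVector G M e = if (e : Sym2 V) ∈ M.edgeSet then 1 else 0 := by
  unfold incidenceVector
  rw [Set.indicator_apply]

/-- Incidence vectors of perfect matchings are 1-regular. -/
lemma incidenceVector_oneRegular {M : G.Subgraph} (hM : M.IsPerfectMatching) :
    OneRegular G (incidenceVector G M) := by
  classical
  intro v
  obtain ⟨w, hw, hw'⟩ := SimpleGraph.Subgraph.isPerfectMatching_iff.mp hM v
  have hadj : G.Adj v w := M.adj_sub hw
  rw [Finset.sum_eq_single (⟨s(v, w), hadj⟩ : G.edgeSet)]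
  · rw [if_pos (Sym2.mem_mk_left v w), incidenceVector_apply,
      if_pos (SimpleGraph.Subgraph.mem_edgeSet.mpr hw)]
  · intro e _ hne
    by_cases hv : v ∈ (e : Sym2 V)
    · rw [if_pos hv, incidenceVector_apply, if_neg]
      intro hmem
      have hspec := Sym2.other_spec' hv
      rw [← hspec] at hmem
      have : Sym2.Mem.other' hv = w := hw' _ (SimpleGraph.Subgraph.mem_edgeSet.mp hmem)
      exact hne (Subtype.ext (by rw [← hspec, this]))
    · exact if_neg hv
  · intro h; exact absurd (Finset.mem_univ _) h

/-- Exactly one endpoint of each edge has color `i` (weighted form). -/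
lemma sum_color_endpoint (c : G.Coloring (Fin 2)) (i : Fin 2) (e : G.edgeSet) (r : ℝ) :
    ∑ w : V, (if c w = i ∧ w ∈ (e : Sym2 V) then r else 0) = r := by
  classical
  obtain ⟨e, he⟩ := e
  induction e with
  | _ a b =>
    have hadj : G.Adj a b := he
    have hab : a ≠ b := hadj.ne
    have hc : c a ≠ c b := c.valid hadj
    have fin2 : ∀ i j k : Fin 2, j ≠ k → i ≠ j → i = k := by decide
    by_cases hia : i = c a
    · rw [Finset.sum_eq_single a]
      · rw [if_pos ⟨hia.symm, Sym2.mem_mk_left a b⟩]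
      · intro w _ hwa
        rw [if_neg]
        rintro ⟨hcw, hmem⟩
        rcases Sym2.mem_iff.mp hmem with rfl | rfl
        · exact hwa rfl
        · exact hc (hcw.trans hia).symm
      · intro h; exact absurd (Finset.mem_univ _) h
    · have hib : i = c b := fin2 i (c a) (c b) hc hia
      rw [Finset.sum_eq_single b]
      · rw [if_pos ⟨hib.symm, Sym2.mem_mk_right a b⟩]
      · intro w _ hwb
        rw [if_neg]
        rintro ⟨hcw, hmem⟩
        rcases Sym2.mem_iff.mp hmem with rfl | rfl
        · exact hia hcw.symm
        · exact hwb rfl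
      · intro h; exact absurd (Finset.mem_univ _) h

/-- Sum over a color class as a sum over all vertices. -/
lemma sum_subtype_color (c : G.Coloring (Fin 2)) (i : Fin 2) (f : V → ℝ) :
    ∑ a : {v : V // c v = i}, f ↑a = ∑ w : V, if c w = i then f w else 0 := by
  classical
  rw [← Finset.sum_filter]
  exact (Finset.sum_subtype _ (by simp) f).symm

/-- The subgraph associated to a permutation of one color class. -/
def matchSubgraph (c : G.Coloring (Fin 2))
    (φ : {v : V // c v = 0} ≃ {v : V // c v = 1})
    (σ : Equiv.Perm {v : V // c v = 0}) : G.Subgraph where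
  verts := Set.univ
  Adj u v := G.Adj u v ∧
    ((∃ a : {v : V // c v = 0}, u = ↑a ∧ v = ↑(φ (σ a))) ∨ (∃ a : {v : V // c v = 0}, v = ↑a ∧ u = ↑(φ (σ a))))
  adj_sub h := h.1
  edge_vert _ := Set.mem_univ _
  symm := ⟨fun u v h => ⟨h.1.symm, h.2.symm⟩⟩

lemma matchSubgraph_isPerfectMatching (c : G.Coloring (Fin 2))
    (φ : {v : V // c v = 0} ≃ {v : V // c v = 1})
    (σ : Equiv.Perm {v : V // c v = 0})
    (hσ : ∀ a : {v : V // c v = 0}, G.Adj ↑a ↑(φ (σ a))) :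
    (matchSubgraph G c φ σ).IsPerfectMatching := by
  rw [SimpleGraph.Subgraph.isPerfectMatching_iff]
  have fin2 : ∀ i : Fin 2, i = 0 ∨ i = 1 := by decide
  have h01 : (0 : Fin 2) ≠ 1 := by decide
  intro v
  rcases fin2 (c v) with hv | hv
  · refine ⟨↑(φ (σ ⟨v, hv⟩)), ⟨hσ ⟨v, hv⟩, Or.inl ⟨⟨v, hv⟩, rfl, rfl⟩⟩, ?_⟩
    rintro y ⟨-, (⟨a, ha1, ha2⟩ | ⟨a, ha1, ha2⟩)⟩
    · have : a = ⟨v, hv⟩ := Subtype.ext ha1.symm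
      rw [ha2, this]
    · rw [ha2] at hv
      exact absurd (hv.symm.trans (φ (σ a)).2) h01
  · refine ⟨↑(σ.symm (φ.symm ⟨v, hv⟩)),
      ⟨(by simpa using (hσ (σ.symm (φ.symm ⟨v, hv⟩))).symm),
        Or.inr ⟨σ.symm (φ.symm ⟨v, hv⟩), rfl, by simp⟩⟩, ?_⟩
    rintro y ⟨-, (⟨a, ha1, ha2⟩ | ⟨a, ha1, ha2⟩)⟩
    · rw [ha1] at hv
      exact absurd (a.2.symm.trans hv) h01
    · have : φ (σ a) = ⟨v, hv⟩ := Subtype.ext ha2.symm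
      have : a = σ.symm (φ.symm ⟨v, hv⟩) := by
        rw [← this]; simp
      rw [ha1, this]

lemma matchSubgraph_edge_mem (c : G.Coloring (Fin 2))
    (φ : {v : V // c v = 0} ≃ {v : V // c v = 1})
    (σ : Equiv.Perm {v : V // c v = 0})
    {u v : V} (hadj : G.Adj u v) (hu : c u = 0) (hv : c v = 1) :
    (s(u, v) ∈ (matchSubgraph G c φ σ).edgeSet) ↔ σ ⟨u, hu⟩ = φ.symm ⟨v, hv⟩ := by
  have h01 : (0 : Fin 2) ≠ 1 := by decide
  rw [SimpleGraph.Subgraph.mem_edgeSet]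
  constructor
  · rintro ⟨-, (⟨a, ha1, ha2⟩ | ⟨a, ha1, ha2⟩)⟩
    · have ha : a = ⟨u, hu⟩ := Subtype.ext ha1.symm
      have : φ (σ ⟨u, hu⟩) = ⟨v, hv⟩ := Subtype.ext (ha ▸ ha2).symm
      rw [← this]; simp
    · rw [ha1] at hv
      exact absurd (a.2.symm.trans hv) h01
  · intro h
    exact ⟨hadj, Or.inl ⟨⟨u, hu⟩, rfl, by rw [h]; simp⟩⟩

end Aux

/-- Birkhoff, von Neumann: for a finite bipartite simple graph, a vector in ℝ^E
belongs to the perfect matching polytope iff it is non-negative and 1-regular. -/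
theorem bipartite_matchingPolytope_iff [Fintype V] [DecidableEq V]
    (G : SimpleGraph V) [DecidableRel G.Adj] (hbip : G.Colorable 2)
    (x : G.edgeSet → ℝ) :
    x ∈ matchingPolytope G ↔ ((∀ e, 0 ≤ x e) ∧ OneRegular G x) := by
  constructor
  · -- forward: the target set is convex and contains the generators
    intro hx
    have hconv : Convex ℝ {y : G.edgeSet → ℝ | (∀ e, 0 ≤ y e) ∧ OneRegular G y} := by
      intro y hy z hz a b ha hb hab
      refine ⟨fun e => add_nonneg (mul_nonneg ha (hy.1 e)) (mul_nonneg hb (hz.1 e)), fun v => ?_⟩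
      have : ∀ e : G.edgeSet, (if v ∈ (e : Sym2 V) then (a • y + b • z) e else 0)
          = a * (if v ∈ (e : Sym2 V) then y e else 0)
            + b * (if v ∈ (e : Sym2 V) then z e else 0) := by
        intro e; split <;> simp
      rw [Finset.sum_congr rfl fun e _ => this e, Finset.sum_add_distrib,
        ← Finset.mul_sum, ← Finset.mul_sum, hy.2 v, hz.2 v, mul_one, mul_one, hab]
    refine convexHull_min ?_ hconv hx
    rintro y ⟨M, hM, rfl⟩
    exact ⟨incidenceVector_nonneg G M, incidenceVector_oneRegular G hM⟩
  · rintro ⟨hx0, hx1⟩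
    classical
    obtain ⟨c⟩ := hbip
    have fin2 : ∀ i : Fin 2, i = 0 ∨ i = 1 := by decide
    have h01 : (0 : Fin 2) ≠ 1 := by decide
    -- both color classes have total x-weight equal to their cardinality
    have hedge : ∀ i : Fin 2,
        (Fintype.card {v : V // c v = i} : ℝ) = ∑ e : G.edgeSet, x e := by
      intro i
      calc (Fintype.card {v : V // c v = i} : ℝ)
          = ∑ _a : {v : V // c v = i}, (1 : ℝ) := by simp
        _ = ∑ a : {v : V // c v = i},
              ∑ e : G.edgeSet, (if (↑a : V) ∈ (e : Sym2 V) then x e else 0) :=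
            Finset.sum_congr rfl (fun a _ => (hx1 ↑a).symm)
        _ = ∑ e : G.edgeSet,
              ∑ a : {v : V // c v = i}, (if (↑a : V) ∈ (e : Sym2 V) then x e else 0) :=
            Finset.sum_comm
        _ = ∑ e : G.edgeSet, x e := by
            refine Finset.sum_congr rfl (fun e _ => ?_)
            rw [sum_subtype_color G c i (fun v => if v ∈ (e : Sym2 V) then x e else 0)]
            refine (Finset.sum_congr rfl (fun v _ => ?_)).trans
              (sum_color_endpoint G c i e (x e))
            by_cases h1 : c v = i <;> by_cases h2 : v ∈ (e : Sym2 V) <;> simp [h1, h2]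
    have hcard : Fintype.card {v : V // c v = 0} = Fintype.card {v : V // c v = 1} :=
      by exact_mod_cast (hedge 0).trans (hedge 1).symm
    let φ : {v : V // c v = 0} ≃ {v : V // c v = 1} := Fintype.equivOfCardEq hcard
    set N : Matrix {v : V // c v = 0} {v : V // c v = 0} ℝ :=
      fun a a' => ∑ e : G.edgeSet,
        if (↑a : V) ∈ (e : Sym2 V) ∧ (↑(φ a') : V) ∈ (e : Sym2 V) then x e else 0 with hNdef
    have hN : N ∈ doublyStochastic ℝ {v : V // c v = 0} := by
      rw [mem_doublyStochastic_iff_sum]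
      refine ⟨fun a a' => ?_, ?_, ?_⟩
      · simp only [hNdef]
        exact Finset.sum_nonneg fun e _ => by split_ifs; exacts [hx0 e, le_rfl]
      · intro a
        rw [hNdef]
        rw [Finset.sum_comm]
        have : ∀ e : G.edgeSet,
            ∑ a' : {v : V // c v = 0},
              (if (↑a : V) ∈ (e : Sym2 V) ∧ (↑(φ a') : V) ∈ (e : Sym2 V) then x e else 0)
            = (if (↑a : V) ∈ (e : Sym2 V) then x e else 0) := by
          intro e
          by_cases h : (↑a : V) ∈ (e : Sym2 V)
          · rw [if_pos h]
            simp only [h, true_and]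
            rw [Equiv.sum_comp φ (fun b : {v : V // c v = 1} =>
              if (↑b : V) ∈ (e : Sym2 V) then x e else 0)]
            rw [sum_subtype_color G c 1 (fun v => if v ∈ (e : Sym2 V) then x e else 0)]
            refine (Finset.sum_congr rfl (fun v _ => ?_)).trans
              (sum_color_endpoint G c 1 e (x e))
            by_cases h1 : c v = 1 <;> by_cases h2 : v ∈ (e : Sym2 V) <;> simp [h1, h2]
          · simp [h]
        rw [Finset.sum_congr rfl (fun e _ => this e)]
        exact hx1 ↑a
      · intro a'
        rw [hNdef]
        rw [Finset.sum_comm]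
        have : ∀ e : G.edgeSet,
            ∑ a : {v : V // c v = 0},
              (if (↑a : V) ∈ (e : Sym2 V) ∧ (↑(φ a') : V) ∈ (e : Sym2 V) then x e else 0)
            = (if (↑(φ a') : V) ∈ (e : Sym2 V) then x e else 0) := by
          intro e
          by_cases h : (↑(φ a') : V) ∈ (e : Sym2 V)
          · rw [if_pos h]
            simp only [h, and_true]
            rw [sum_subtype_color G c 0 (fun v => if v ∈ (e : Sym2 V) then x e else 0)]
            refine (Finset.sum_congr rfl (fun v _ => ?_)).trans
              (sum_color_endpoint G c 0 e (x e))
            by_cases h1 : c v = 0 <;> by_cases h2 : v ∈ (e : Sym2 V) <;> simp [h1, h2]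
          · simp [h]
        rw [Finset.sum_congr rfl (fun e _ => this e)]
        exact hx1 ↑(φ a')
    obtain ⟨w, hw0, hw1, hwN⟩ := exists_eq_sum_perm_of_mem_doublyStochastic hN
    have hperm : ∀ (σ : Equiv.Perm {v : V // c v = 0}) (a b : {v : V // c v = 0}),
        σ.permMatrix ℝ a b = if σ a = b then 1 else 0 := by
      intro σ a b
      simp [Equiv.Perm.permMatrix, PEquiv.toMatrix_apply, Equiv.toPEquiv_apply,
        Option.mem_def, eq_comm]
    have hNentry : ∀ a b : {v : V // c v = 0},
        N a b = ∑ σ : Equiv.Perm {v : V // c v = 0}, w σ * (if σ a = b then 1 else 0) := by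
      intro a b
      rw [← hwN]
      simp [Matrix.sum_apply, Equiv.toPEquiv_apply]
    have hsupp : ∀ σ : Equiv.Perm {v : V // c v = 0}, w σ ≠ 0 →
        ∀ a : {v : V // c v = 0}, G.Adj ↑a ↑(φ (σ a)) := by
      intro σ hσ a
      have hwpos : 0 < w σ := lt_of_le_of_ne (hw0 σ) (Ne.symm hσ)
      have hpos : 0 < N a (σ a) := by
        rw [hNentry]
        calc (0 : ℝ) < w σ * (if σ a = σ a then 1 else 0) := by simp [hwpos]
          _ ≤ ∑ σ' : Equiv.Perm {v : V // c v = 0}, w σ' * (if σ' a = σ a then 1 else 0) :=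
            Finset.single_le_sum
              (f := fun σ' => w σ' * (if σ' a = σ a then 1 else 0))
              (fun σ' _ => mul_nonneg (hw0 σ') (by split_ifs <;> norm_num))
              (Finset.mem_univ σ)
      rw [hNdef] at hpos
      obtain ⟨e, -, he⟩ := Finset.exists_ne_zero_of_sum_ne_zero hpos.ne'
      have hcond : (↑a : V) ∈ (e : Sym2 V) ∧ (↑(φ (σ a)) : V) ∈ (e : Sym2 V) := by
        by_contra hc
        rw [if_neg hc] at he
        exact he rfl
      have hne : (↑a : V) ≠ ↑(φ (σ a)) := by
        intro h
        exact h01 (a.2.symm.trans (h ▸ (φ (σ a)).2))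
      have := sym2_eq_of_ne_mem hne hcond.1 hcond.2
      have he2 := e.2
      rw [this] at he2
      exact he2
    -- coordinate identity
    have hxcoord : ∀ ε : G.edgeSet, x ε = ∑ σ : Equiv.Perm {v : V // c v = 0},
        w σ * incidenceVector G (matchSubgraph G c φ σ) ε := by
      intro ε
      obtain ⟨u, v, huv, hadjuv, hu, hv⟩ :
          ∃ u v : V, (ε : Sym2 V) = s(u, v) ∧ G.Adj u v ∧ c u = 0 ∧ c v = 1 := by
        obtain ⟨e, he⟩ := ε
        induction e with
        | _ p q =>
          have hadj : G.Adj p q := he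
          rcases fin2 (c p) with hp | hp
          · have hq : c q = 1 := by
              rcases fin2 (c q) with h | h
              · exact absurd (hp.trans h.symm) (c.valid hadj)
              · exact h
            exact ⟨p, q, rfl, hadj, hp, hq⟩
          · have hq : c q = 0 := by
              rcases fin2 (c q) with h | h
              · exact h
              · exact absurd (hp.trans h.symm) (c.valid hadj)
            exact ⟨q, p, Sym2.eq_swap, hadj.symm, hq, hp⟩
      have hne : u ≠ v := hadjuv.ne
      have hφv : (↑(φ (φ.symm ⟨v, hv⟩)) : V) = v := by simp
      have h1 : N ⟨u, hu⟩ (φ.symm ⟨v, hv⟩) = x ε := by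
        simp only [hNdef]
        rw [Finset.sum_eq_single ε]
        · rw [if_pos]
          refine ⟨?_, ?_⟩
          · rw [huv]; exact Sym2.mem_mk_left u v
          · rw [huv, hφv]; exact Sym2.mem_mk_right u v
        · intro e _ hedne
          rw [if_neg]
          rintro ⟨hm1, hm2⟩
          rw [hφv] at hm2
          have : (e : Sym2 V) = s(u, v) := sym2_eq_of_ne_mem hne hm1 hm2
          exact hedne (Subtype.ext (this.trans huv.symm))
        · intro h; exact absurd (Finset.mem_univ _) h
      have h2 : ∀ σ : Equiv.Perm {v : V // c v = 0},
          incidenceVector G (matchSubgraph G c φ σ) ε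
            = if σ ⟨u, hu⟩ = φ.symm ⟨v, hv⟩ then 1 else 0 := by
        intro σ
        rw [incidenceVector_apply]
        simp only [huv]
        simp only [matchSubgraph_edge_mem G c φ σ hadjuv hu hv]
      calc x ε = N ⟨u, hu⟩ (φ.symm ⟨v, hv⟩) := h1.symm
        _ = ∑ σ : Equiv.Perm {v : V // c v = 0},
              w σ * (if σ ⟨u, hu⟩ = φ.symm ⟨v, hv⟩ then 1 else 0) := hNentry _ _
        _ = ∑ σ : Equiv.Perm {v : V // c v = 0},
              w σ * incidenceVector G (matchSubgraph G c φ σ) ε := by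
            refine Finset.sum_congr rfl (fun σ _ => ?_)
            rw [h2 σ]
    -- assemble convex combination over the support of w
    set t : Finset (Equiv.Perm {v : V // c v = 0}) :=
      Finset.univ.filter (fun σ => w σ ≠ 0) with ht
    have hts : ∑ σ ∈ t, w σ = 1 := by
      rw [ht, Finset.sum_filter_ne_zero]
      exact hw1
    have hxsum : x = ∑ σ ∈ t, w σ • incidenceVector G (matchSubgraph G c φ σ) := by
      funext ε
      rw [Finset.sum_apply]
      rw [hxcoord ε, ht]
      rw [Finset.sum_filter_of_ne (fun σ _ h => ?_)]
      · refine Finset.sum_congr rfl (fun σ _ => ?_)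
        simp [smul_eq_mul]
      · intro h0
        rw [Pi.smul_apply, h0, zero_smul] at h
        exact h rfl
    have hmem : t.centerMass w (fun σ => incidenceVector G (matchSubgraph G c φ σ)) ∈
        convexHull ℝ {y : G.edgeSet → ℝ |
          ∃ M : G.Subgraph, M.IsPerfectMatching ∧ y = incidenceVector G M} := by
      refine Finset.centerMass_mem_convexHull t (fun σ _ => hw0 σ)
        (by rw [hts]; norm_num) (fun σ hσt => ?_)
      rw [ht] at hσt
      exact ⟨matchSubgraph G c φ σ, matchSubgraph_isPerfectMatching G c φ σ
        (hsupp σ (Finset.mem_filter.mp hσt).2), rfl⟩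
    rw [Finset.centerMass_eq_of_sum_1 _ _ hts] at hmem
    rw [matchingPolytope, hxsum]
    exact hmem
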